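/- arXiv:2108.01134 — 8 statements merged into one kernel-verified Lean document; each statement's English description precedes it below -/
import Mathlib

section
/- Assume V is finite and |X| ≥ 3. If f is a collective choice rule (on the universal domain of profiles of transitive complete individual preferences) satisfying IIA and Pareto, and for every profile R the strict social preference P(f(R)) is negatively transitive, then there is a dictator for f. -/
/-- A profile assigns to each voter a transitive and complete preference relation. -/
structure Profile (V X : Type*) where
  rel : V → X → X → Prop
  total : ∀ i x y, rel i x y ∨ rel i y x
  trans : ∀ i x y z, rel i x y → rel i y z → rel i x z

/-- A collective choice rule maps profiles to binary relations on candidates. -/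
abbrev CCR (V X : Type*) := Profile V X → X → X → Prop

/-- Strict part of a relation. -/
def strictPref {X : Type*} (R : X → X → Prop) (x y : X) : Prop := R x y ∧ ¬ R y x

/-- The restriction of a profile to the pair {x,y}. -/
def Profile.restrict {V X : Type*} (R : Profile V X) (x y : X) : V → X → X → Prop :=
  fun i a b => (a = x ∨ a = y) ∧ (b = x ∨ b = y) ∧ R.rel i a b

/-- The preprofile obtained by removing the pairs ⟨x,y⟩ and ⟨y,x⟩ from every voter's relation. -/
def Profile.remove {V X : Type*} (R : Profile V X) (x y : X) : V → X → X → Prop :=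
  fun i a b => R.rel i a b ∧ ¬ ((a = x ∧ b = y) ∨ (a = y ∧ b = x))

/-- Majority margin of x over y in a preprofile. -/
noncomputable def marginOf {V X : Type*} (p : V → X → X → Prop) (x y : X) : ℤ :=
  (Nat.card {i : V // strictPref (p i) x y} : ℤ) -
    (Nat.card {i : V // strictPref (p i) y x} : ℤ)

attribute [local instance] Classical.propDecidable

namespace ArrowAux

variable {V X : Type*}

def ofScores (s : V → X → ℤ) : Profile V X where
  rel i x y := s i y ≤ s i x
  total i x y := le_total (s i y) (s i x)
  trans _ _ _ _ h1 h2 := le_trans h2 h1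

lemma strict_ofScores (s : V → X → ℤ) (i : V) (x y : X) :
    strictPref ((ofScores s).rel i) x y ↔ s i y < s i x := by
  exact lt_iff_le_not_ge.symm

lemma rel_ofScores (s : V → X → ℤ) (i : V) (x y : X) :
    (ofScores s).rel i x y ↔ s i y ≤ s i x := Iff.rfl

lemma Profile.refl (R : Profile V X) (i : V) (x : X) : R.rel i x x := (R.total i x x).elim id id

noncomputable def scoreOf (R : Profile V X) (i : V) (x : X) : ℤ :=
  (({y | R.rel i x y} : Set X).ncard : ℤ)

lemma rel_iff_score [Finite X] (R : Profile V X) (i : V) (x y : X) :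
    R.rel i x y ↔ scoreOf R i y ≤ scoreOf R i x := by
  constructor
  · intro h
    have hsub : {z | R.rel i y z} ⊆ {z | R.rel i x z} := fun z hz => R.trans i x y z h hz
    have := Set.ncard_le_ncard hsub (Set.toFinite _)
    simp only [scoreOf]
    exact_mod_cast this
  · intro h
    by_contra hxy
    have hyx : R.rel i y x := (R.total i x y).resolve_left hxy
    have hss : {z | R.rel i x z} ⊂ {z | R.rel i y z} := by
      constructor
      · exact fun z hz => R.trans i y x z hyx hz
      · intro hsub
        exact hxy (hsub (Profile.refl R i y) : R.rel i x y)
    have h' := Set.ncard_lt_ncard hss (Set.toFinite _)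
    have : scoreOf R i x < scoreOf R i y := by
      simp only [scoreOf]; exact_mod_cast h'
    omega
  
lemma strict_iff_score [Finite X] (R : Profile V X) (i : V) (x y : X) :
    strictPref (R.rel i) x y ↔ scoreOf R i y < scoreOf R i x := by
  rw [strictPref, rel_iff_score R i x y, rel_iff_score R i y x, ← lt_iff_le_not_ge]

lemma exists_third [Finite X] (h3 : 3 ≤ Nat.card X) (a b : X) : ∃ c : X, c ≠ a ∧ c ≠ b := by
  by_contra h
  push_neg at h
  have hsub : (Set.univ : Set X) ⊆ {a, b} := by
    intro c _
    rcases Classical.em (c = a) with rfl | hc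
    · exact Set.mem_insert _ _
    · exact Set.mem_insert_iff.mpr (Or.inr (h c hc))
  have h1 : (Set.univ : Set X).ncard ≤ ({a, b} : Set X).ncard :=
    Set.ncard_le_ncard hsub (Set.toFinite _)
  have h2 : ({a, b} : Set X).ncard ≤ 2 := by
    calc ({a, b} : Set X).ncard ≤ ({b} : Set X).ncard + 1 := Set.ncard_insert_le _ _
    _ ≤ 2 := by simp
  rw [Set.ncard_univ] at h1
  omega

section Main

set_option linter.unusedSectionVars false

variable [Finite V] [Finite X] [Nonempty V] [Nonempty X]
variable (f : CCR V X)
    (hIIA : ∀ (x y : X) (R R' : Profile V X), R.restrict x y = R'.restrict x y →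
      (f R x y ↔ f R' x y))
    (hPareto : ∀ (x y : X) (R : Profile V X),
      (∀ i, strictPref (R.rel i) x y) → strictPref (f R) x y)
    (hnegtrans : ∀ (R : Profile V X) (x y z : X),
      ¬ strictPref (f R) x y → ¬ strictPref (f R) y z → ¬ strictPref (f R) x z)
    (h3 : 3 ≤ Nat.card X)

lemma P_asymm {R : X → X → Prop} {x y : X} (h : strictPref R x y) : ¬ strictPref R y x :=
  fun h' => h.2 h'.1

include hnegtrans in
lemma P_trans (R : Profile V X) {x y z : X} (h1 : strictPref (f R) x y)
    (h2 : strictPref (f R) y z) : strictPref (f R) x z := by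
  by_contra hxz
  exact hnegtrans R x z y hxz (P_asymm h2) h1

include hIIA in
lemma IIA_strict {R R' : Profile V X} {x y : X}
    (h : ∀ (i : V) (a b : X), (a = x ∨ a = y) → (b = x ∨ b = y) → (R.rel i a b ↔ R'.rel i a b)) :
    strictPref (f R) x y ↔ strictPref (f R') x y := by
  have e1 : R.restrict x y = R'.restrict x y := by
    funext i a b
    apply propext
    constructor
    · rintro ⟨ha, hb, hr⟩; exact ⟨ha, hb, (h i a b ha hb).1 hr⟩
    · rintro ⟨ha, hb, hr⟩; exact ⟨ha, hb, (h i a b ha hb).2 hr⟩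
  have e2 : R.restrict y x = R'.restrict y x := by
    funext i a b
    apply propext
    constructor
    · rintro ⟨ha, hb, hr⟩; exact ⟨ha, hb, (h i a b ha.symm hb.symm).1 hr⟩
    · rintro ⟨ha, hb, hr⟩; exact ⟨ha, hb, (h i a b ha.symm hb.symm).2 hr⟩
  rw [strictPref, strictPref, hIIA x y R R' e1, hIIA y x R R' e2]

lemma agree_pair_of_strict {R R' : Profile V X} {x y : X}
    (h : ∀ i : V, (strictPref (R.rel i) x y ∧ strictPref (R'.rel i) x y) ∨
      (strictPref (R.rel i) y x ∧ strictPref (R'.rel i) y x)) :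
    ∀ (i : V) (a b : X), (a = x ∨ a = y) → (b = x ∨ b = y) → (R.rel i a b ↔ R'.rel i a b) := by
  intro i a b ha hb
  have hi := h i
  simp only [strictPref] at hi
  rcases ha with rfl | rfl <;> rcases hb with rfl | rfl <;>
    first
      | exact iff_of_true (Profile.refl R i _) (Profile.refl R' i _)
      | tauto

include hIIA in
lemma IIA_strict_of_strict {R R' : Profile V X} {x y : X}
    (h : ∀ i : V, (strictPref (R.rel i) x y ∧ strictPref (R'.rel i) x y) ∨
      (strictPref (R.rel i) y x ∧ strictPref (R'.rel i) y x)) :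
    strictPref (f R) x y ↔ strictPref (f R') x y :=
  IIA_strict f hIIA (agree_pair_of_strict h)

include hIIA hPareto hnegtrans h3 in
lemma extremal (b : X) (R : Profile V X)
    (hb : ∀ i : V, (∀ a, a ≠ b → strictPref (R.rel i) b a) ∨
      (∀ a, a ≠ b → strictPref (R.rel i) a b)) :
    (∀ a, a ≠ b → strictPref (f R) b a) ∨ (∀ a, a ≠ b → strictPref (f R) a b) := by
  by_contra hcon
  push_neg at hcon
  obtain ⟨⟨a, hab, hPa⟩, ⟨c, hcb, hPc⟩⟩ := hcon
  -- get a' ≠ c', both ≠ b, with ¬ P b a' and ¬ P c' b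
  obtain ⟨a', c', ha'b, hc'b, hne, hPa', hPc'⟩ :
      ∃ a' c' : X, a' ≠ b ∧ c' ≠ b ∧ a' ≠ c' ∧
        ¬ strictPref (f R) b a' ∧ ¬ strictPref (f R) c' b := by
    rcases Classical.em (a = c) with rfl | hac
    · obtain ⟨d, hda, hdb⟩ := exists_third h3 a b
      rcases Classical.em (strictPref (f R) a d) with had | had
      · refine ⟨a, d, hab, hdb, fun h => hda h.symm, hPa, fun hdbP => ?_⟩
        exact hPc (P_trans f hnegtrans R had hdbP)
      · exact ⟨d, a, hdb, hab, fun h => hda h, hnegtrans R b a d hPa had, hPc⟩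
    · exact ⟨a, c, hab, hcb, hac, hPa, hPc⟩
  classical
  set s : V → X → ℤ := fun i x =>
    if x = b then (if (∀ a, a ≠ b → strictPref (R.rel i) b a) then 3 else -3)
    else if x = c' then 2 else if x = a' then 1 else 0 with hs
  set R' := ofScores s with hR'
  have hsa' : ∀ i, s i a' = 1 := by
    intro i; simp [hs, ha'b, hne]
  have hsc' : ∀ i, s i c' = 2 := by
    intro i; simp [hs, hc'b]
  -- each voter in R' ranks both pairs {b,a'} and {b,c'} strictly, same direction as in R
  have hpair : ∀ (z : X), z = a' ∨ z = c' → ∀ i : V,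
      (strictPref (R.rel i) b z ∧ strictPref (R'.rel i) b z) ∨
      (strictPref (R.rel i) z b ∧ strictPref (R'.rel i) z b) := by
    intro z hz i
    have hzb : z ≠ b := by rcases hz with rfl | rfl <;> assumption
    have hsz : s i z = 1 ∨ s i z = 2 := by
      rcases hz with rfl | rfl
      · exact Or.inl (hsa' i)
      · exact Or.inr (hsc' i)
    rcases hb i with htop | hbot
    · left
      refine ⟨htop z hzb, ?_⟩
      rw [hR', strict_ofScores]
      have : s i b = 3 := by simp [hs]; exact htop
      omega
    · right
      have hnt : ¬ (∀ a, a ≠ b → strictPref (R.rel i) b a) := by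
        intro htop
        exact (htop z hzb).2 (hbot z hzb).1
      refine ⟨hbot z hzb, ?_⟩
      rw [hR', strict_ofScores]
      have : s i b = -3 := by simp [hs]; exact ⟨z, hzb, fun h => (hbot z hzb).2 h.1⟩
      omega
  -- transport ¬P b a' and ¬P c' b to R'
  have hPa'2 : ¬ strictPref (f R') b a' := fun h =>
    hPa' ((IIA_strict_of_strict f hIIA (hpair a' (Or.inl rfl))).2 h)
  have hPc'2 : ¬ strictPref (f R') c' b := fun h =>
    hPc' ((IIA_strict_of_strict f hIIA (fun i => (hpair c' (Or.inr rfl) i).symm)).2 h)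
  -- Pareto: everyone strictly prefers c' to a' in R'
  have hPar : strictPref (f R') c' a' := by
    apply hPareto
    intro i
    rw [hR', strict_ofScores, hsa' i, hsc' i]
    omega
  exact (hnegtrans R' c' b a' hPc'2 hPa'2) hPar

noncomputable def piProf (b : X) (S : Set V) : Profile V X :=
  ofScores (fun i x => if x = b then (if i ∈ S then 1 else -1) else 0)

lemma pi_top {b : X} {S : Set V} {i : V} (hi : i ∈ S) {a : X} (ha : a ≠ b) :
    strictPref ((piProf b S).rel i) b a := by
  rw [piProf, strict_ofScores]
  simp [ha, hi]

lemma pi_bot {b : X} {S : Set V} {i : V} (hi : i ∉ S) {a : X} (ha : a ≠ b) :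
    strictPref ((piProf b S).rel i) a b := by
  rw [piProf, strict_ofScores]
  simp [ha, hi]

def topAt (b : X) (S : Set V) : Prop := ∀ a, a ≠ b → strictPref (f (piProf b S)) b a

def botAt (b : X) (S : Set V) : Prop := ∀ a, a ≠ b → strictPref (f (piProf b S)) a b

include hIIA hPareto hnegtrans h3 in
lemma top_or_bot (b : X) (S : Set V) : topAt f b S ∨ botAt f b S := by
  apply extremal f hIIA hPareto hnegtrans h3 b (piProf b S)
  intro i
  rcases Classical.em (i ∈ S) with hi | hi
  · exact Or.inl (fun a ha => pi_top hi ha)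
  · exact Or.inr (fun a ha => pi_bot hi ha)

include h3 in
lemma not_top_and_bot (b : X) (S : Set V) : ¬ (topAt f b S ∧ botAt f b S) := by
  rintro ⟨ht, hb⟩
  obtain ⟨a, -, hab⟩ := exists_third h3 b b
  exact (ht a hab).2 (hb a hab).1

include hPareto in
lemma bot_empty (b : X) : botAt f b (∅ : Set V) := fun a ha =>
  hPareto a b _ (fun i => pi_bot (Set.notMem_empty i) ha)

include hPareto in
lemma top_univ (b : X) : topAt f b (Set.univ : Set V) := fun a ha =>
  hPareto b a _ (fun i => pi_top (Set.mem_univ i) ha)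

lemma exists_flip (P : ℕ → Prop) : ∀ n : ℕ, ¬ P 0 → P n → ∃ k < n, ¬ P k ∧ P (k + 1) := by
  intro n
  induction n with
  | zero => intro h0 h; exact absurd h h0
  | succ n ih =>
    intro h0 h
    rcases Classical.em (P n) with hn | hn
    · obtain ⟨k, hk, h1, h2⟩ := ih h0 hn
      exact ⟨k, Nat.lt_succ_of_lt hk, h1, h2⟩
    · exact ⟨n, Nat.lt_succ_self n, hn, h⟩

include hIIA hPareto hnegtrans h3 in
lemma exists_pivot (b : X) :
    ∃ (i : V) (S : Set V), i ∉ S ∧ botAt f b S ∧ topAt f b (S ∪ {i}) := by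
  classical
  have : Fintype V := Fintype.ofFinite V
  set l : List V := (Finset.univ : Finset V).toList with hl
  have hnodup : l.Nodup := Finset.nodup_toList _
  have hmem : ∀ v : V, v ∈ l := fun v => (Finset.mem_toList).2 (Finset.mem_univ v)
  set Sk : ℕ → Set V := fun k => {v | v ∈ l.take k} with hSk
  have h0 : ¬ topAt f b (Sk 0) := by
    intro ht
    have hb0 : botAt f b (Sk 0) := by
      have : Sk 0 = (∅ : Set V) := by ext v; simp [hSk]
      rw [this]; exact bot_empty f hPareto b
    exact not_top_and_bot f h3 b (Sk 0) ⟨ht, hb0⟩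
  have hn : topAt f b (Sk l.length) := by
    have : Sk l.length = Set.univ := by
      ext v; simp [hSk, List.take_length, hmem v]
    rw [this]; exact top_univ f hPareto b
  obtain ⟨k, hk, hnt, ht⟩ := exists_flip (fun k => topAt f b (Sk k)) l.length h0 hn
  refine ⟨l.get ⟨k, hk⟩, Sk k, ?_, ?_, ?_⟩
  · intro hmem'
    have : ∃ j : Fin l.length, j.1 < k ∧ l.get j = l.get ⟨k, hk⟩ := by
      simp only [hSk, Set.mem_setOf_eq, List.mem_take_iff_getElem] at hmem'
      obtain ⟨j, hj, hje⟩ := hmem'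
      exact ⟨⟨j, lt_of_lt_of_le hj (min_le_right _ _)⟩,
        lt_of_lt_of_le hj (min_le_left _ _), by simpa using hje⟩
    obtain ⟨j, hjk, hje⟩ := this
    have := List.nodup_iff_injective_get.1 hnodup hje
    rw [this] at hjk
    exact lt_irrefl _ hjk
  · exact (top_or_bot f hIIA hPareto hnegtrans h3 b (Sk k)).resolve_left hnt
  · have hseq : Sk (k + 1) = Sk k ∪ {l.get ⟨k, hk⟩} := by
      ext v
      simp only [hSk, Set.mem_setOf_eq, Set.mem_union, Set.mem_singleton_iff]
      rw [List.take_succ, List.getElem?_eq_getElem hk, List.mem_append]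
      simp [List.get_eq_getElem]
    rw [← hseq]; exact ht

include hIIA hnegtrans in
lemma step3 (b : X) (i : V) (S : Set V) (hiS : i ∉ S)
    (hbot : botAt f b S) (htop : topAt f b (S ∪ {i}))
    (a c : X) (hab : a ≠ b) (hcb : c ≠ b) (R : Profile V X)
    (hpref : strictPref (R.rel i) a c) : strictPref (f R) a c := by
  classical
  have hac : a ≠ c := by rintro rfl; exact hpref.2 hpref.1
  set sc : V → X → ℤ := scoreOf R with hsc
  have hca : sc i c < sc i a := (strict_iff_score R i a c).1 hpref
  choose M hM using fun v => Finite.exists_max (sc v)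
  choose m hm using fun v => Finite.exists_min (sc v)
  set s' : V → X → ℤ := fun v x =>
    if x = b then
      (if v = i then 2 * sc i c + 1
       else if v ∈ S then 2 * sc v (M v) + 1 else 2 * sc v (m v) - 1)
    else 2 * sc v x with hs'
  set R' := ofScores s' with hR'
  have hs'ne : ∀ (v : V) (x : X), x ≠ b → s' v x = 2 * sc v x := by
    intro v x hx; simp [hs', hx]
  have hs'i : s' i b = 2 * sc i c + 1 := by
    simp [hs']
  have hs'S : ∀ v ∈ S, s' v b = 2 * sc v (M v) + 1 := by
    intro v hv
    have hvi : v ≠ i := by rintro rfl; exact hiS hv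
    simp [hs', hvi, hv]
  have hs'o : ∀ v, v ∉ S → v ≠ i → s' v b = 2 * sc v (m v) - 1 := by
    intro v hv hvi; simp [hs', hvi, hv]
  -- key1 : a over b socially in R', from botAt S
  have key1 : strictPref (f R') a b := by
    rw [← IIA_strict_of_strict f hIIA (R := piProf b S) (R' := R') (x := a) (y := b) ?_]
    · exact hbot a hab
    · intro v
      rcases Classical.em (v ∈ S) with hv | hv
      · refine Or.inr ⟨pi_top hv hab, ?_⟩
        rw [hR', strict_ofScores, hs'S v hv, hs'ne v a hab]
        have := hM v a
        omega
      · refine Or.inl ⟨pi_bot hv hab, ?_⟩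
        rw [hR', strict_ofScores, hs'ne v a hab]
        rcases Classical.em (v = i) with rfl | hvi
        · rw [hs'i]; omega
        · rw [hs'o v hv hvi]
          have := hm v a
          omega
  -- key2 : b over c socially in R', from topAt (S ∪ {i})
  have key2 : strictPref (f R') b c := by
    rw [← IIA_strict_of_strict f hIIA (R := piProf b (S ∪ {i})) (R' := R') (x := b) (y := c) ?_]
    · exact htop c hcb
    · intro v
      rcases Classical.em (v ∈ S ∪ {i}) with hv | hv
      · refine Or.inl ⟨pi_top hv hcb, ?_⟩
        rw [hR', strict_ofScores, hs'ne v c hcb]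
        rcases hv with hv | hv
        · rw [hs'S v hv]
          have := hM v c
          omega
        · rw [Set.mem_singleton_iff] at hv
          subst hv
          rw [hs'i]; omega
      · have hvS : v ∉ S := fun h => hv (Or.inl h)
        have hvi : v ≠ i := fun h => hv (Or.inr (Set.mem_singleton_iff.2 h))
        refine Or.inr ⟨pi_bot hv hcb, ?_⟩
        rw [hR', strict_ofScores, hs'o v hvS hvi, hs'ne v c hcb]
        have := hm v c
        omega
  have key3 : strictPref (f R') a c := P_trans f hnegtrans R' key1 key2
  -- transport back to R via IIA on {a, c}
  rw [IIA_strict f hIIA (R' := R') ?_]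
  · exact key3
  · intro v x y hx hy
    have hxb : x ≠ b := by rcases hx with rfl | rfl <;> assumption
    have hyb : y ≠ b := by rcases hy with rfl | rfl <;> assumption
    rw [hR', rel_ofScores, hs'ne v x hxb, hs'ne v y hyb,
      rel_iff_score R v x y, ← hsc]
    constructor <;> intro h <;> omega

include hIIA hPareto hnegtrans h3 in
lemma main : ∃ i : V, ∀ (x y : X) (R : Profile V X),
    strictPref (R.rel i) x y → strictPref (f R) x y := by
  classical
  obtain ⟨b⟩ := (inferInstance : Nonempty X)
  obtain ⟨i, S, hiS, hbot, htop⟩ := exists_pivot f hIIA hPareto hnegtrans h3 b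
  refine ⟨i, fun x y R hxy => ?_⟩
  have hxyne : x ≠ y := by rintro rfl; exact hxy.2 hxy.1
  rcases Classical.em (x ≠ b ∧ y ≠ b) with ⟨hx, hy⟩ | hxb
  · exact step3 f hIIA hnegtrans b i S hiS hbot htop x y hx hy R hxy
  · have hb' : x = b ∨ y = b := by tauto
    obtain ⟨e, hex, hey⟩ := exists_third h3 x y
    have heb : e ≠ b := by rcases hb' with rfl | rfl <;> assumption
    obtain ⟨m, S', hmS', hbot', htop'⟩ := exists_pivot f hIIA hPareto hnegtrans h3 e
    have hdict' := step3 f hIIA hnegtrans e m S' hmS' hbot' htop'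
    have hmi : m = i := by
      obtain ⟨a, hab, hae⟩ := exists_third h3 b e
      have hbe : b ≠ e := heb.symm
      have h1 : m ∉ S := by
        intro hmem
        have hba : strictPref (f (piProf b S)) b a :=
          hdict' b a hbe hae (piProf b S) (pi_top hmem hab)
        exact (hbot a hab).2 hba.1
      have h2 : m ∈ S ∪ {i} := by
        by_contra hne
        have hab' : strictPref (f (piProf b (S ∪ {i}))) a b :=
          hdict' a b hae hbe (piProf b (S ∪ {i})) (pi_bot hne hab)
        exact (htop a hab).2 hab'.1
      rcases h2 with h2 | h2
      · exact absurd h2 h1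
      · exact Set.mem_singleton_iff.1 h2
    subst hmi
    exact hdict' x y hex.symm hey.symm R hxy

end Main
end ArrowAux

/-- Strengthened Arrow: IIA + Pareto + negative transitivity of strict social preference
implies a dictator. -/
theorem arrow_negatively_transitive {V X : Type*} [Finite V] [Finite X]
    [Nonempty V] [Nonempty X] (h3 : 3 ≤ Nat.card X) (f : CCR V X)
    (hIIA : ∀ (x y : X) (R R' : Profile V X), R.restrict x y = R'.restrict x y →
      (f R x y ↔ f R' x y))
    (hPareto : ∀ (x y : X) (R : Profile V X),
      (∀ i, strictPref (R.rel i) x y) → strictPref (f R) x y)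
    (hnegtrans : ∀ (R : Profile V X) (x y z : X),
      ¬ strictPref (f R) x y → ¬ strictPref (f R) y z → ¬ strictPref (f R) x z) :
    ∃ i : V, ∀ (x y : X) (R : Profile V X),
      strictPref (R.rel i) x y → strictPref (f R) x y :=
  ArrowAux.main f hIIA hPareto hnegtrans h3
end

section
/- If a collective choice rule f is advantage-standard rationalizable, then f satisfies weak IIA: for all x,y and profiles R, R' agreeing on {x,y}, xP(f(R))y implies not yP(f(R'))x. -/
/-- A totally ordered group structure on G. -/
structure TOGroupStr (G : Type) where
  mul : G → G → G
  one : G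
  inv : G → G
  le : G → G → Prop
  mul_assoc : ∀ a b c, mul (mul a b) c = mul a (mul b c)
  one_mul : ∀ a, mul one a = a
  mul_one : ∀ a, mul a one = a
  inv_mul_cancel : ∀ a, mul (inv a) a = one
  mul_inv_cancel : ∀ a, mul a (inv a) = one
  le_refl : ∀ a, le a a
  le_trans : ∀ a b c, le a b → le b c → le a c
  le_antisymm : ∀ a b, le a b → le b a → a = b
  le_total : ∀ a b, le a b ∨ le b a
  mul_le_mul_left : ∀ a b c, le a b → le (mul c a) (mul c b)
  mul_le_mul_right : ∀ a b c, le a b → le (mul a c) (mul b c)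

/-- Strict order of a totally ordered group structure. -/
def TOGroupStr.lt {G : Type} (S : TOGroupStr G) (a b : G) : Prop := S.le a b ∧ a ≠ b

/-- A CCR is advantage-standard rationalizable if there are a totally ordered group and
advantage/standard functions such that strict social preference holds exactly when the
advantage exceeds the standard. -/
def ASRationalizable {V X : Type*} (f : CCR V X) : Prop :=
  ∃ (G : Type) (S : TOGroupStr G)
    (Adv : X → X → (V → X → X → Prop) → G)
    (Std : X → X → (V → X → X → Prop) → G),
    (∀ (x y : X) (R : Profile V X),
        Adv x y (R.restrict x y) = S.inv (Adv y x (R.restrict x y))) ∧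
    (∀ (x y : X) (R : Profile V X), S.le S.one (Std x y (R.remove x y))) ∧
    (∀ (x y : X) (R : Profile V X),
        strictPref (f R) x y ↔ S.lt (Std x y (R.remove x y)) (Adv x y (R.restrict x y)))
/-- Weak IIA: two profiles alike on {x,y} cannot have opposite strict social preferences. -/
def WeakIIA {V X : Type*} (f : CCR V X) : Prop :=
  ∀ (x y : X) (R R' : Profile V X), R.restrict x y = R'.restrict x y →
    strictPref (f R) x y → ¬ strictPref (f R') y x

/-- AS rationalizability implies weak IIA. -/
theorem as_rationalizable_implies_weakIIA {V X : Type*} (f : CCR V X)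
    (h : ASRationalizable f) : WeakIIA f := by
  obtain ⟨G, S, Adv, Std, hAdv, hStd, hIff⟩ := h
  intro x y R R' hagree hxy hyx
  have hQ : R'.restrict y x = R.restrict x y := by
    funext i a b
    have : R'.restrict x y = R.restrict x y := hagree.symm
    have h2 := congrFun (congrFun (congrFun this i) a) b
    simp only [Profile.restrict, eq_iff_iff] at h2 ⊢
    tauto
  have h1 := (hIff x y R).mp hxy
  have h2 := (hIff y x R').mp hyx
  rw [hQ] at h2
  set Q := R.restrict x y with hQdef
  set a := Adv x y Q with ha
  set b := Adv y x Q with hb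
  have hab : a = S.inv b := hAdv x y R
  -- one < a
  have hone_a : S.lt S.one a := by
    refine ⟨S.le_trans _ _ _ (hStd x y R) h1.1, fun e => ?_⟩
    have : S.le a (Std x y (R.remove x y)) := e ▸ hStd x y R
    exact h1.2 (S.le_antisymm _ _ h1.1 this)
  -- one < b
  have hone_b : S.lt S.one b := by
    refine ⟨S.le_trans _ _ _ (hStd y x R') h2.1, fun e => ?_⟩
    have : S.le b (Std y x (R'.remove y x)) := e ▸ hStd y x R'
    exact h2.2 (S.le_antisymm _ _ h2.1 this)
  -- a = inv b ≤ one
  have hle : S.le a S.one := by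
    have := S.mul_le_mul_left S.one b (S.inv b) hone_b.1
    rw [S.mul_one, S.inv_mul_cancel] at this
    rw [hab]; exact this
  have hne : a ≠ S.one := by
    intro e
    apply hone_b.2
    have hinv : S.inv b = S.one := by rw [← hab, e]
    have := S.mul_inv_cancel b
    rw [hinv, S.mul_one] at this
    exact this.symm
  exact hne (S.le_antisymm _ _ hle hone_a.1)
end

section
/- A collective choice rule f is advantage-standard rationalizable if and only if f satisfies weak IIA and orderability. -/
/-- The set of restricted {x,y}-profiles for which some extending profile yields a strict
social preference of x over y. -/
def PPlus {V X : Type*} (f : CCR V X) (x y : X) : Set (V → X → X → Prop) :=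
  {Q | ∃ R : Profile V X, R.restrict x y = Q ∧ strictPref (f R) x y}

/-- Orderability of a CCR. -/
def Orderable {V X : Type*} (f : CCR V X) : Prop :=
  ∀ x y : X, ∃ lq : (V → X → X → Prop) → (V → X → X → Prop) → Prop,
    (∀ Q₁ ∈ PPlus f x y, ∀ Q₂ ∈ PPlus f x y, ∀ Q₃ ∈ PPlus f x y,
        lq Q₁ Q₂ → lq Q₂ Q₃ → lq Q₁ Q₃) ∧
    (∀ Q₁ ∈ PPlus f x y, ∀ Q₂ ∈ PPlus f x y, lq Q₁ Q₂ ∨ lq Q₂ Q₁) ∧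
    (∀ R₁ R₂ : Profile V X, lq (R₁.restrict x y) (R₂.restrict x y) →
        R₁.remove x y = R₂.remove x y →
        strictPref (f R₁) x y → strictPref (f R₂) x y)


section ASAux
variable {V X : Type*}

lemma restrict_symm (R : Profile V X) (x y : X) : R.restrict x y = R.restrict y x := by
  funext i a b
  exact propext ⟨fun ⟨h1, h2, h3⟩ => ⟨h1.symm, h2.symm, h3⟩,
    fun ⟨h1, h2, h3⟩ => ⟨h1.symm, h2.symm, h3⟩⟩

noncomputable def intS : TOGroupStr ℤ where
  mul a b := a + b
  one := 0
  inv a := -a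
  le a b := a ≤ b
  mul_assoc a b c := by show a + b + c = a + (b + c); omega
  one_mul a := by show 0 + a = a; omega
  mul_one a := by show a + 0 = a; omega
  inv_mul_cancel a := by show -a + a = 0; omega
  mul_inv_cancel a := by show a + -a = 0; omega
  le_refl a := le_refl a
  le_trans a b c h1 h2 := le_trans h1 h2
  le_antisymm a b h1 h2 := by omega
  le_total a b := le_total a b
  mul_le_mul_left a b c h := by show c + a ≤ c + b; omega
  mul_le_mul_right a b c h := by show a + c ≤ b + c; omega

lemma intS_lt (a b : ℤ) : intS.lt a b ↔ a < b := by
  unfold TOGroupStr.lt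
  constructor
  · rintro ⟨h1, h2⟩; exact lt_of_le_of_ne h1 h2
  · intro h; exact ⟨le_of_lt h, ne_of_lt h⟩

noncomputable def NAdv (f : CCR V X)
    (lq : X → X → (V → X → X → Prop) → (V → X → X → Prop) → Prop)
    (x y : X) (Q : V → X → X → Prop) : ℕ :=
  {Q' | Q' ∈ PPlus f x y ∧ lq x y Q' Q}.ncard

open Classical in
noncomputable def AdvF (f : CCR V X)
    (lq : X → X → (V → X → X → Prop) → (V → X → X → Prop) → Prop)
    (x y : X) (Q : V → X → X → Prop) : ℤ :=
  if Q ∈ PPlus f x y then (NAdv f lq x y Q : ℤ)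
  else if Q ∈ PPlus f y x then -(NAdv f lq y x Q : ℤ) else 0

open Classical in
noncomputable def StdF (f : CCR V X)
    (lq : X → X → (V → X → X → Prop) → (V → X → X → Prop) → Prop)
    (x y : X) (p : V → X → X → Prop) : ℤ :=
  if _h : ∃ R : Profile V X, R.remove x y = p ∧ strictPref (f R) x y then
    ((sInf {n : ℕ | ∃ R : Profile V X, R.remove x y = p ∧ strictPref (f R) x y ∧
      (AdvF f lq x y (R.restrict x y)).toNat = n} : ℕ) : ℤ) - 1
  else ((PPlus f x y).ncard : ℤ)

variable [Finite V] [Finite X]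

lemma NAdv_pos (f : CCR V X) (lq : X → X → (V → X → X → Prop) → (V → X → X → Prop) → Prop)
    (htot : ∀ x y : X, ∀ Q₁ ∈ PPlus f x y, ∀ Q₂ ∈ PPlus f x y, lq x y Q₁ Q₂ ∨ lq x y Q₂ Q₁)
    {x y : X} {Q : V → X → X → Prop} (hQ : Q ∈ PPlus f x y) : 1 ≤ NAdv f lq x y Q := by
  have hself : lq x y Q Q := (htot x y Q hQ Q hQ).elim id id
  exact (Set.ncard_pos (Set.toFinite _)).2 ⟨Q, hQ, hself⟩

lemma NAdv_le (f : CCR V X) (lq : X → X → (V → X → X → Prop) → (V → X → X → Prop) → Prop)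
    (x y : X) (Q : V → X → X → Prop) : NAdv f lq x y Q ≤ (PPlus f x y).ncard :=
  Set.ncard_le_ncard (fun _ h => h.1) (Set.toFinite _)

lemma AdvF_nonpos (f : CCR V X) (lq : X → X → (V → X → X → Prop) → (V → X → X → Prop) → Prop)
    (x y : X) (Q : V → X → X → Prop) (h : Q ∉ PPlus f x y) : AdvF f lq x y Q ≤ 0 := by
  unfold AdvF
  rw [if_neg h]
  split_ifs <;> omega

lemma AdvF_le_card (f : CCR V X) (lq : X → X → (V → X → X → Prop) → (V → X → X → Prop) → Prop)
    (x y : X) (Q : V → X → X → Prop) : AdvF f lq x y Q ≤ ((PPlus f x y).ncard : ℤ) := by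
  unfold AdvF
  split_ifs with h1 h2
  · exact_mod_cast NAdv_le f lq x y Q
  · omega
  · omega

lemma NAdv_rev (f : CCR V X) (lq : X → X → (V → X → X → Prop) → (V → X → X → Prop) → Prop)
    (htrans : ∀ x y : X, ∀ Q₁ ∈ PPlus f x y, ∀ Q₂ ∈ PPlus f x y, ∀ Q₃ ∈ PPlus f x y,
      lq x y Q₁ Q₂ → lq x y Q₂ Q₃ → lq x y Q₁ Q₃)
    (htot : ∀ x y : X, ∀ Q₁ ∈ PPlus f x y, ∀ Q₂ ∈ PPlus f x y, lq x y Q₁ Q₂ ∨ lq x y Q₂ Q₁)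
    {x y : X} {Q₁ Q₂ : V → X → X → Prop}
    (h1 : Q₁ ∈ PPlus f x y) (h2 : Q₂ ∈ PPlus f x y)
    (h : NAdv f lq x y Q₁ ≤ NAdv f lq x y Q₂) : lq x y Q₁ Q₂ := by
  by_contra hc
  have h21 : lq x y Q₂ Q₁ := (htot x y Q₁ h1 Q₂ h2).resolve_left hc
  have hsub : {Q' | Q' ∈ PPlus f x y ∧ lq x y Q' Q₂} ⊆ {Q' | Q' ∈ PPlus f x y ∧ lq x y Q' Q₁} :=
    fun Q' hQ' => ⟨hQ'.1, htrans x y Q' hQ'.1 Q₂ h2 Q₁ h1 hQ'.2 h21⟩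
  have hmem : Q₁ ∈ {Q' | Q' ∈ PPlus f x y ∧ lq x y Q' Q₁} :=
    ⟨h1, (htot x y Q₁ h1 Q₁ h1).elim id id⟩
  have hss : {Q' | Q' ∈ PPlus f x y ∧ lq x y Q' Q₂} ⊂ {Q' | Q' ∈ PPlus f x y ∧ lq x y Q' Q₁} :=
    ⟨hsub, fun hsub' => hc (hsub' hmem).2⟩
  exact absurd (Set.ncard_lt_ncard hss (Set.toFinite _)) (not_lt.2 h)

end ASAux

/-- Characterization: AS rationalizability is equivalent to weak IIA together with
orderability. -/
theorem as_rationalizable_iff_weakIIA_and_orderable {V X : Type*} [Finite V] [Finite X]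
    (f : CCR V X) : ASRationalizable f ↔ WeakIIA f ∧ Orderable f := by
  constructor
  · rintro ⟨G, S, Adv, Std, hinv, hstd, hiff⟩
    have hlt_le : ∀ a b c, S.lt a b → S.le b c → S.lt a c := by
      rintro a b c ⟨hab, hne⟩ hbc
      refine ⟨S.le_trans _ _ _ hab hbc, fun hac => ?_⟩
      subst hac
      exact hne (S.le_antisymm _ _ hab hbc)
    have hle_lt : ∀ a b c, S.le a b → S.lt b c → S.lt a c := by
      rintro a b c hab ⟨hbc, hne⟩
      refine ⟨S.le_trans _ _ _ hab hbc, fun hac => ?_⟩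
      subst hac
      exact hne (S.le_antisymm _ _ hbc hab)
    have honeA : ∀ (x y : X) (R : Profile V X), strictPref (f R) x y →
        S.lt S.one (Adv x y (R.restrict x y)) := fun x y R h =>
      hle_lt _ _ _ (hstd x y R) ((hiff x y R).1 h)
    constructor
    · intro x y R R' hres hxy hyx
      have h1 := honeA x y R hxy
      have h2 := honeA y x R' hyx
      rw [hinv y x R', restrict_symm R' y x, ← hres] at h2
      obtain ⟨ha, hna⟩ := h1
      obtain ⟨hb, hnb⟩ := h2
      have h3 := S.mul_le_mul_left S.one (S.inv (Adv x y (R.restrict x y)))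
        (Adv x y (R.restrict x y)) hb
      rw [S.mul_one, S.mul_inv_cancel] at h3
      exact hna (S.le_antisymm _ _ ha h3)
    · intro x y
      refine ⟨fun Q₁ Q₂ => S.le (Adv x y Q₁) (Adv x y Q₂),
        fun Q₁ _ Q₂ _ Q₃ _ h12 h23 => S.le_trans _ _ _ h12 h23,
        fun Q₁ _ Q₂ _ => S.le_total _ _, ?_⟩
      intro R₁ R₂ hlq hrem h1
      have h := (hiff x y R₁).1 h1
      rw [hrem] at h
      exact (hiff x y R₂).2 (hlt_le _ _ _ h hlq)
  · rintro ⟨hW, hO⟩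
    choose lq htrans htot hmono using hO
    have hdisj : ∀ (x y : X) (Q : V → X → X → Prop),
        Q ∈ PPlus f x y → Q ∈ PPlus f y x → False := by
      rintro x y Q ⟨R, hR, hRp⟩ ⟨R', hR', hR'p⟩
      exact hW x y R R' (by rw [hR, restrict_symm R' x y, hR']) hRp hR'p
    refine ⟨ℤ, intS, AdvF f lq, StdF f lq, ?_, ?_, ?_⟩
    · intro x y R
      show AdvF f lq x y (R.restrict x y) = -(AdvF f lq y x (R.restrict x y))
      unfold AdvF
      split_ifs with h1 h2 h3 <;> try omega
      all_goals first
        | exact (hdisj x y _ ‹_› ‹_›).elim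
        | exact (hdisj y x _ ‹_› ‹_›).elim
    · intro x y R
      show (0:ℤ) ≤ StdF f lq x y (R.remove x y)
      unfold StdF
      split_ifs with hE
      · obtain ⟨R₁, hr1, hs1⟩ := hE
        obtain ⟨R₀, hrem₀, hsp₀, hval₀⟩ := Nat.sInf_mem
          (⟨(AdvF f lq x y (R₁.restrict x y)).toNat, R₁, hr1, hs1, rfl⟩ :
            Set.Nonempty {n : ℕ | ∃ R' : Profile V X, R'.remove x y = R.remove x y ∧
              strictPref (f R') x y ∧ (AdvF f lq x y (R'.restrict x y)).toNat = n})
        have hmem₀ : R₀.restrict x y ∈ PPlus f x y := ⟨R₀, rfl, hsp₀⟩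
        have hA₀ : AdvF f lq x y (R₀.restrict x y) = (NAdv f lq x y (R₀.restrict x y) : ℤ) := by
          unfold AdvF; rw [if_pos hmem₀]
        have h1₀ := NAdv_pos f lq htot hmem₀
        omega
      · omega
    · intro x y R
      rw [intS_lt]
      constructor
      · intro h
        have hmem : R.restrict x y ∈ PPlus f x y := ⟨R, rfl, h⟩
        have hE : ∃ R' : Profile V X, R'.remove x y = R.remove x y ∧ strictPref (f R') x y :=
          ⟨R, rfl, h⟩
        unfold StdF
        rw [dif_pos hE]
        have hmemset : (AdvF f lq x y (R.restrict x y)).toNat ∈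
            {n : ℕ | ∃ R' : Profile V X, R'.remove x y = R.remove x y ∧
              strictPref (f R') x y ∧ (AdvF f lq x y (R'.restrict x y)).toNat = n} :=
          ⟨R, rfl, h, rfl⟩
        have hle := Nat.sInf_le hmemset
        have hA : AdvF f lq x y (R.restrict x y) = (NAdv f lq x y (R.restrict x y) : ℤ) := by
          unfold AdvF; rw [if_pos hmem]
        have h1 := NAdv_pos f lq htot hmem
        omega
      · intro h
        unfold StdF at h
        by_cases hE : ∃ R' : Profile V X, R'.remove x y = R.remove x y ∧ strictPref (f R') x y
        · rw [dif_pos hE] at h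
          obtain ⟨R₁, hr1, hs1⟩ := hE
          obtain ⟨R₀, hrem₀, hsp₀, hval₀⟩ := Nat.sInf_mem
            (⟨(AdvF f lq x y (R₁.restrict x y)).toNat, R₁, hr1, hs1, rfl⟩ :
              Set.Nonempty {n : ℕ | ∃ R' : Profile V X, R'.remove x y = R.remove x y ∧
                strictPref (f R') x y ∧ (AdvF f lq x y (R'.restrict x y)).toNat = n})
          have hmem₀ : R₀.restrict x y ∈ PPlus f x y := ⟨R₀, rfl, hsp₀⟩
          have hA₀ : AdvF f lq x y (R₀.restrict x y) = (NAdv f lq x y (R₀.restrict x y) : ℤ) := by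
            unfold AdvF; rw [if_pos hmem₀]
          have h1₀ := NAdv_pos f lq htot hmem₀
          have hmemR : R.restrict x y ∈ PPlus f x y := by
            by_contra hc
            have := AdvF_nonpos f lq x y _ hc
            omega
          have hAR : AdvF f lq x y (R.restrict x y) = (NAdv f lq x y (R.restrict x y) : ℤ) := by
            unfold AdvF; rw [if_pos hmemR]
          have hNle : NAdv f lq x y (R₀.restrict x y) ≤ NAdv f lq x y (R.restrict x y) := by
            omega
          exact hmono x y R₀ R (NAdv_rev f lq htrans htot hmem₀ hmemR hNle) hrem₀ hsp₀
        · rw [dif_neg hE] at h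
          exact absurd h (not_lt.2 (AdvF_le_card f lq x y (R.restrict x y)))
end

section
/- If a collective choice rule f is advantage-standard rationalizable, then f is AS rationalizable with advantage and standard functions taking values in the totally ordered group of integers under addition. -/
namespace TOGroupStr

variable {G : Type} (S : TOGroupStr G)

lemma inv_one' : S.inv S.one = S.one := by
  have h := S.inv_mul_cancel S.one
  rwa [S.mul_one] at h

lemma inv_inv' (a : G) : S.inv (S.inv a) = a := by
  have h1 : S.mul (S.mul (S.inv (S.inv a)) (S.inv a)) a
      = S.mul (S.inv (S.inv a)) (S.mul (S.inv a) a) := S.mul_assoc _ _ _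
  rw [S.inv_mul_cancel, S.one_mul, S.inv_mul_cancel, S.mul_one] at h1
  exact h1.symm

lemma inv_inj' {a b : G} (h : S.inv a = S.inv b) : a = b := by
  rw [← S.inv_inv' a, h, S.inv_inv']

lemma le_inv' {a b : G} (h : S.le a b) : S.le (S.inv b) (S.inv a) := by
  have h1 := S.mul_le_mul_left a b (S.inv b) h
  rw [S.inv_mul_cancel] at h1
  have h2 := S.mul_le_mul_right _ _ (S.inv a) h1
  rw [S.one_mul, S.mul_assoc, S.mul_inv_cancel, S.mul_one] at h2
  exact h2

lemma lt_inv' {a b : G} (h : S.lt a b) : S.lt (S.inv b) (S.inv a) :=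
  ⟨S.le_inv' h.1, fun he => h.2 (S.inv_inj' he).symm⟩

lemma lt_trans' {a b c : G} (h1 : S.lt a b) (h2 : S.lt b c) : S.lt a c := by
  refine ⟨S.le_trans _ _ _ h1.1 h2.1, fun he => ?_⟩
  subst he
  exact h1.2 (S.le_antisymm _ _ h1.1 h2.1)

lemma lt_trichotomy' (a b : G) : S.lt a b ∨ a = b ∨ S.lt b a := by
  by_cases he : a = b
  · exact Or.inr (Or.inl he)
  · rcases S.le_total a b with h | h
    · exact Or.inl ⟨h, he⟩
    · exact Or.inr (Or.inr ⟨h, fun h' => he h'.symm⟩)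

end TOGroupStr

section Phi

variable {G : Type} (S : TOGroupStr G) (A : Set G)

/-- Integer rank of an element relative to the finite set `A`. -/
noncomputable def phiRank (a : G) : ℤ :=
  ((A ∩ {s | S.lt s a}).ncard : ℤ) - ((A ∩ {s | S.lt a s}).ncard : ℤ)

lemma phiRank_strictMono (hA : A.Finite) {a b : G} (ha : a ∈ A) (hb : b ∈ A)
    (hab : S.lt a b) : phiRank S A a < phiRank S A b := by
  have h1 : (A ∩ {s | S.lt s a}).ncard < (A ∩ {s | S.lt s b}).ncard := by
    apply Set.ncard_lt_ncard
    · constructor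
      · rintro s ⟨hsA, hs⟩; exact ⟨hsA, S.lt_trans' hs hab⟩
      · intro hsub
        have h3 : a ∈ A ∩ {s | S.lt s a} := hsub ⟨ha, hab⟩
        exact h3.2.2 rfl
    · exact hA.inter_of_left _
  have h2 : (A ∩ {s | S.lt b s}).ncard < (A ∩ {s | S.lt a s}).ncard := by
    apply Set.ncard_lt_ncard
    · constructor
      · rintro s ⟨hsA, hs⟩; exact ⟨hsA, S.lt_trans' hab hs⟩
      · intro hsub
        have h3 : b ∈ A ∩ {s | S.lt b s} := hsub ⟨hb, hab⟩
        exact h3.2.2 rfl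
    · exact hA.inter_of_left _
  unfold phiRank
  omega

lemma phiRank_inv (hinv : ∀ s ∈ A, S.inv s ∈ A) (a : G) :
    phiRank S A (S.inv a) = - phiRank S A a := by
  have hinj : Function.Injective S.inv := fun x y h => S.inv_inj' h
  have e1 : A ∩ {s | S.lt s (S.inv a)} = S.inv '' (A ∩ {s | S.lt a s}) := by
    ext s
    constructor
    · rintro ⟨hsA, hs⟩
      refine ⟨S.inv s, ⟨hinv s hsA, ?_⟩, S.inv_inv' s⟩
      have h := S.lt_inv' hs
      rwa [S.inv_inv'] at h
    · rintro ⟨t, ⟨htA, ht⟩, rfl⟩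
      exact ⟨hinv t htA, S.lt_inv' ht⟩
  have e2 : A ∩ {s | S.lt (S.inv a) s} = S.inv '' (A ∩ {s | S.lt s a}) := by
    ext s
    constructor
    · rintro ⟨hsA, hs⟩
      refine ⟨S.inv s, ⟨hinv s hsA, ?_⟩, S.inv_inv' s⟩
      have h := S.lt_inv' hs
      rwa [S.inv_inv'] at h
    · rintro ⟨t, ⟨htA, ht⟩, rfl⟩
      exact ⟨hinv t htA, S.lt_inv' ht⟩
  unfold phiRank
  rw [e1, e2, Set.ncard_image_of_injective _ hinj, Set.ncard_image_of_injective _ hinj]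
  ring

lemma phiRank_one (hinv : ∀ s ∈ A, S.inv s ∈ A) : phiRank S A S.one = 0 := by
  have h := phiRank_inv S A hinv S.one
  rw [S.inv_one'] at h
  omega

end Phi

/-- If a CCR is AS rationalizable, then it is AS rationalizable with integer-valued
advantage and standard functions (the integers with addition and the usual order). -/
theorem as_rationalizable_int {V X : Type*} [Finite V] [Finite X] (f : CCR V X)
    (h : ASRationalizable f) :
    ∃ (Adv : X → X → (V → X → X → Prop) → ℤ)
      (Std : X → X → (V → X → X → Prop) → ℤ),
      (∀ (x y : X) (R : Profile V X),
          Adv x y (R.restrict x y) = - Adv y x (R.restrict x y)) ∧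
      (∀ (x y : X) (R : Profile V X), 0 ≤ Std x y (R.remove x y)) ∧
      (∀ (x y : X) (R : Profile V X),
          strictPref (f R) x y ↔ Std x y (R.remove x y) < Adv x y (R.restrict x y)) := by
  classical
  obtain ⟨G, S, Adv, Std, hAdv, hStd, hIff⟩ := h
  -- the finite set of all relevant values, closed under inversion
  set B : Set G := (Set.range fun t : X × X × (V → X → X → Prop) => Adv t.1 t.2.1 t.2.2) ∪
      (Set.range fun t : X × X × (V → X → X → Prop) => Std t.1 t.2.1 t.2.2) ∪ {S.one} with hB
  set A : Set G := B ∪ S.inv '' B with hAdef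
  have hBfin : B.Finite := by
    apply Set.Finite.union
    apply Set.Finite.union
    · exact Set.finite_range _
    · exact Set.finite_range _
    · exact Set.finite_singleton _
  have hAfin : A.Finite := hBfin.union (hBfin.image _)
  have hinv : ∀ s ∈ A, S.inv s ∈ A := by
    rintro s (hs | ⟨t, ht, rfl⟩)
    · exact Or.inr ⟨s, hs, rfl⟩
    · rw [S.inv_inv']; exact Or.inl ht
  have hAdvMem : ∀ (x y : X) (p : V → X → X → Prop), Adv x y p ∈ A :=
    fun x y p => Or.inl (Or.inl (Or.inl ⟨(x, y, p), rfl⟩))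
  have hStdMem : ∀ (x y : X) (p : V → X → X → Prop), Std x y p ∈ A :=
    fun x y p => Or.inl (Or.inl (Or.inr ⟨(x, y, p), rfl⟩))
  have hOneMem : S.one ∈ A := Or.inl (Or.inr rfl)
  set φ : G → ℤ := phiRank S A with hφ
  have hmono : ∀ {a b : G}, a ∈ A → b ∈ A → S.lt a b → φ a < φ b :=
    fun ha hb hab => phiRank_strictMono S A hAfin ha hb hab
  have hltiff : ∀ {a b : G}, a ∈ A → b ∈ A → (S.lt a b ↔ φ a < φ b) := by
    intro a b ha hb
    constructor
    · exact hmono ha hb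
    · intro hlt
      rcases S.lt_trichotomy' a b with h1 | h1 | h1
      · exact h1
      · subst h1; omega
      · exact absurd (hmono hb ha h1) (by omega)
  refine ⟨fun x y p => φ (Adv x y p), fun x y p => φ (Std x y p), ?_, ?_, ?_⟩
  · intro x y R
    show φ (Adv x y (R.restrict x y)) = -φ (Adv y x (R.restrict x y))
    rw [hAdv x y R, hφ, phiRank_inv S A hinv]
  · intro x y R
    show (0 : ℤ) ≤ φ (Std x y (R.remove x y))
    have h0 := hStd x y R
    have hone : φ S.one = 0 := phiRank_one S A hinv
    rcases S.lt_trichotomy' S.one (Std x y (R.remove x y)) with h1 | h1 | h1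
    · have h2 := hmono hOneMem (hStdMem x y _) h1
      omega
    · rw [← h1, hone]
    · exact absurd (S.le_antisymm _ _ h0 h1.1).symm h1.2
  · intro x y R
    show strictPref (f R) x y ↔ φ (Std x y (R.remove x y)) < φ (Adv x y (R.restrict x y))
    rw [hIff x y R]
    exact hltiff (hStdMem x y _) (hAdvMem x y _)
end

section
/- Assume |V| ≥ 2 and |X| ≥ 3. The Copeland CCR (defined by xf(R)y iff the Copeland score of x in R is at least that of y) is a social welfare function (transitive and complete) satisfying anonymity, neutrality, Pareto, and orderability, but it does not satisfy weak IIA. -/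
/-- Copeland score of a candidate. -/
noncomputable def copelandScore {V X : Type*} (R : Profile V X) (x : X) : ℤ :=
  (Nat.card {y : X // 0 < marginOf R.rel x y} : ℤ) -
    (Nat.card {y : X // 0 < marginOf R.rel y x} : ℤ)

/-- The Copeland CCR. -/
noncomputable def copeland (V X : Type*) : CCR V X :=
  fun R x y => copelandScore R y ≤ copelandScore R x

/-- Permuting the voters of a profile. -/
def Profile.permVoters {V X : Type*} (R : Profile V X) (τ : Equiv.Perm V) : Profile V X :=
  ⟨fun i => R.rel (τ i), fun i => R.total (τ i), fun i => R.trans (τ i)⟩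

/-- Permuting the candidates of a profile. -/
def Profile.permCands {V X : Type*} (R : Profile V X) (π : Equiv.Perm X) : Profile V X :=
  ⟨fun i a b => R.rel i (π.symm a) (π.symm b),
   fun i a b => R.total i (π.symm a) (π.symm b),
   fun i a b c h1 h2 => R.trans i _ _ _ h1 h2⟩

section Helpers
variable {V X : Type*}

lemma card_congr' {P Q : V → Prop} (h : ∀ i, P i ↔ Q i) :
    Nat.card {i // P i} = Nat.card {i // Q i} :=
  Nat.card_congr (Equiv.subtypeEquivRight h)

open Classical in
lemma card_le' [Fintype V] {P Q : V → Prop} (h : ∀ i, P i → Q i) :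
    Nat.card {i // P i} ≤ Nat.card {i // Q i} := by
  rw [Nat.card_eq_fintype_card, Nat.card_eq_fintype_card]
  exact Fintype.card_subtype_mono _ _ h

lemma card_of_false {P : V → Prop} (h : ∀ i, ¬ P i) : Nat.card {i // P i} = 0 := by
  have : IsEmpty {i // P i} := ⟨fun ⟨i, hi⟩ => h i hi⟩
  simp [Nat.card_of_isEmpty]

open Classical in
lemma card_of_true [Fintype V] {P : V → Prop} (h : ∀ i, P i) :
    Nat.card {i // P i} = Fintype.card V := by
  rw [Nat.card_eq_fintype_card, Fintype.card_subtype]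
  rw [Finset.filter_true_of_mem (fun i _ => h i)]
  simp

lemma card_of_eq {P : V → Prop} (v : V) (h : ∀ i, P i ↔ i = v) :
    Nat.card {i // P i} = 1 := by
  rw [card_congr' h]
  simp [Nat.card_eq_fintype_card]

lemma card_of_pair {P : V → Prop} (v w : V) (hvw : v ≠ w)
    (h : ∀ i, P i ↔ i = v ∨ i = w) : Nat.card {i // P i} = 2 := by
  rw [card_congr' h]
  calc Nat.card {i // i = v ∨ i = w} = Nat.card ({v, w} : Set V) := rfl
    _ = ({v, w} : Set V).ncard := (Nat.card_coe_set_eq _).symm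
    _ = 2 := Set.ncard_pair hvw

lemma marginOf_self (p : V → X → X → Prop) (x : X) : marginOf p x x = 0 := by
  unfold marginOf
  ring

lemma marginOf_antisymm (p : V → X → X → Prop) (x y : X) :
    marginOf p y x = - marginOf p x y := by
  unfold marginOf
  ring

open Classical in
lemma copelandScore_eq_sum [Fintype V] [Fintype X] (R : Profile V X) (x : X) :
    copelandScore R x = ∑ z : X,
      ((if 0 < marginOf R.rel x z then (1:ℤ) else 0) -
        (if 0 < marginOf R.rel z x then (1:ℤ) else 0)) := by
  have key : ∀ P : X → Prop, (Nat.card {z // P z} : ℤ) = ∑ z : X, if P z then (1:ℤ) else 0 := by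
    intro P
    rw [Nat.card_eq_fintype_card, Fintype.card_subtype, Finset.card_filter]
    push_cast [apply_ite]
    rfl
  unfold copelandScore
  rw [key, key, ← Finset.sum_sub_distrib]
  exact Finset.sum_congr rfl fun z _ => by congr 1 <;> simp

lemma copeland_def {V X : Type*} (R : Profile V X) (x y : X) :
    copeland V X R x y ↔ copelandScore R y ≤ copelandScore R x := Iff.rfl

lemma strict_copeland_iff [Fintype V] [Fintype X] (R : Profile V X) (x y : X) :
    strictPref (copeland V X R) x y ↔ copelandScore R y < copelandScore R x := by
  constructor
  · rintro ⟨h1, h2⟩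
    exact lt_of_le_not_ge h1 h2
  · intro h
    exact ⟨le_of_lt h, not_le.2 h⟩

end Helpers
section Helpers2
variable {V X : Type*}

lemma marginOf_permVoters (R : Profile V X) (τ : Equiv.Perm V) (x y : X) :
    marginOf (R.permVoters τ).rel x y = marginOf R.rel x y := by
  unfold marginOf
  congr 2 <;>
    exact Nat.card_congr (Equiv.subtypeEquiv τ (fun i => Iff.rfl))

lemma copelandScore_permVoters [Fintype V] [Fintype X] (R : Profile V X) (τ : Equiv.Perm V)
    (x : X) : copelandScore (R.permVoters τ) x = copelandScore R x := by
  unfold copelandScore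
  congr 2 <;> exact card_congr' (fun z => by rw [marginOf_permVoters])

lemma marginOf_permCands (R : Profile V X) (π : Equiv.Perm X) (x y : X) :
    marginOf (R.permCands π).rel (π x) (π y) = marginOf R.rel x y := by
  unfold marginOf
  congr 2 <;> exact card_congr' (fun i => by simp [strictPref, Profile.permCands])

lemma copelandScore_permCands [Fintype V] [Fintype X] (R : Profile V X) (π : Equiv.Perm X)
    (x : X) : copelandScore (R.permCands π) (π x) = copelandScore R x := by
  unfold copelandScore
  congr 2
  · exact (Nat.card_congr (Equiv.subtypeEquiv π (fun z => by rw [marginOf_permCands]))).symm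
  · exact (Nat.card_congr (Equiv.subtypeEquiv π (fun z => by rw [marginOf_permCands]))).symm

lemma copeland_pareto [Fintype V] [Fintype X] [Nonempty V] (R : Profile V X) (x y : X)
    (h : ∀ i, strictPref (R.rel i) x y) : copelandScore R y < copelandScore R x := by
  have hWin : ∀ i z, strictPref (R.rel i) y z → strictPref (R.rel i) x z := by
    intro i z ⟨hyz, hzy⟩
    exact ⟨R.trans i x y z (h i).1 hyz, fun hzx => hzy (R.trans i z x y hzx (h i).1)⟩
  have hLose : ∀ i z, strictPref (R.rel i) z x → strictPref (R.rel i) z y := by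
    intro i z ⟨hzx, hxz⟩
    exact ⟨R.trans i z x y hzx (h i).1, fun hyz => hxz (R.trans i x y z (h i).1 hyz)⟩
  have hm : ∀ z, marginOf R.rel y z ≤ marginOf R.rel x z := by
    intro z
    unfold marginOf
    have h1 := card_le' (fun i => hWin i z)
    have h2 := card_le' (fun i => hLose i z)
    have h1' : (Nat.card {i // strictPref (R.rel i) y z} : ℤ) ≤
        Nat.card {i // strictPref (R.rel i) x z} := Int.ofNat_le.2 h1
    have h2' : (Nat.card {i // strictPref (R.rel i) z x} : ℤ) ≤
        Nat.card {i // strictPref (R.rel i) z y} := Int.ofNat_le.2 h2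
    linarith
  have hmx : 0 < marginOf R.rel x y := by
    unfold marginOf
    rw [card_of_true (fun i => h i), card_of_false (fun i hi => hi.2 (h i).1)]
    have := Fintype.card_pos (α := V)
    push_cast
    omega
  have hmyx : marginOf R.rel y x < 0 := by
    have e1 := marginOf_antisymm R.rel x y
    linarith
  rw [← sub_pos, copelandScore_eq_sum, copelandScore_eq_sum, ← Finset.sum_sub_distrib]
  apply Finset.sum_pos'
  · intro z _
    have h1 := hm z
    have h2 : marginOf R.rel z x ≤ marginOf R.rel z y := by
      have e1 := marginOf_antisymm R.rel x z
      have e2 := marginOf_antisymm R.rel y z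
      linarith [hm z]
    split_ifs <;> linarith
  · refine ⟨y, Finset.mem_univ y, ?_⟩
    rw [marginOf_self]
    split_ifs <;> linarith

lemma margin_restrict (R : Profile V X) (x y : X) :
    marginOf (R.restrict x y) x y = marginOf R.rel x y := by
  unfold marginOf
  congr 2 <;> exact card_congr' (fun i => by simp [strictPref, Profile.restrict])

lemma margin_remove_eq {R₁ R₂ : Profile V X} {x y : X} (h : R₁.remove x y = R₂.remove x y)
    (a b : X) (hab : ¬((a = x ∧ b = y) ∨ (a = y ∧ b = x))) :
    marginOf R₁.rel a b = marginOf R₂.rel a b := by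
  have hrel : ∀ i p q, ¬((p = x ∧ q = y) ∨ (p = y ∧ q = x)) →
      (R₁.rel i p q ↔ R₂.rel i p q) := by
    intro i p q hpq
    have h' := congrFun (congrFun (congrFun h i) p) q
    simp only [Profile.remove, eq_iff_iff] at h'
    tauto
  have hba : ¬((b = x ∧ a = y) ∨ (b = y ∧ a = x)) := by tauto
  unfold marginOf
  congr 2
  · exact card_congr' fun i => by
      unfold strictPref; rw [hrel i a b hab, hrel i b a hba]
  · exact card_congr' fun i => by
      unfold strictPref; rw [hrel i a b hab, hrel i b a hba]

lemma copeland_orderable_key [Fintype V] [Fintype X] {R₁ R₂ : Profile V X} {x y : X}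
    (hrem : R₁.remove x y = R₂.remove x y)
    (hm : marginOf R₁.rel x y ≤ marginOf R₂.rel x y)
    (h1 : copelandScore R₁ y < copelandScore R₁ x) :
    copelandScore R₂ y < copelandScore R₂ x := by
  have hm' : marginOf R₂.rel y x ≤ marginOf R₁.rel y x := by
    have e1 := marginOf_antisymm R₁.rel x y
    have e2 := marginOf_antisymm R₂.rel x y
    linarith
  have hsum : copelandScore R₁ x - copelandScore R₁ y ≤
      copelandScore R₂ x - copelandScore R₂ y := by
    rw [copelandScore_eq_sum, copelandScore_eq_sum, copelandScore_eq_sum,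
      copelandScore_eq_sum, ← Finset.sum_sub_distrib, ← Finset.sum_sub_distrib]
    apply Finset.sum_le_sum
    intro z _
    by_cases hzx : z = x
    · subst hzx
      simp only [marginOf_self, lt_irrefl, if_false]
      split_ifs <;> linarith
    by_cases hzy : z = y
    · subst hzy
      simp only [marginOf_self, lt_irrefl, if_false]
      split_ifs <;> linarith
    · rw [margin_remove_eq hrem x z (by tauto), margin_remove_eq hrem z x (by tauto),
        margin_remove_eq hrem y z (by tauto), margin_remove_eq hrem z y (by tauto)]
  linarith

lemma copeland_orderable [Fintype V] [Fintype X] : Orderable (copeland V X) := by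
  intro x y
  refine ⟨fun Q₁ Q₂ => marginOf Q₁ x y ≤ marginOf Q₂ x y, ?_, ?_, ?_⟩
  · intro _ _ _ _ _ _ h1 h2; exact le_trans h1 h2
  · intro Q₁ _ Q₂ _; exact le_total _ _
  · intro R₁ R₂ hlq hrem h1
    rw [margin_restrict, margin_restrict] at hlq
    rw [strict_copeland_iff] at h1 ⊢
    exact copeland_orderable_key hrem hlq h1

end Helpers2
section Counterexample
variable {V X : Type*}

def scoreProfile (u : V → X → ℤ) : Profile V X :=
  ⟨fun i a b => u i b ≤ u i a,
   fun i a b => le_total (u i b) (u i a),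
   fun i a b c h1 h2 => le_trans h2 h1⟩

lemma strict_scoreProfile (u : V → X → ℤ) (i : V) (x y : X) :
    strictPref ((scoreProfile u).rel i) x y ↔ u i y < u i x := by
  constructor
  · rintro ⟨h1, h2⟩
    exact lt_of_le_not_ge h1 h2
  · intro h
    exact ⟨le_of_lt h, not_le.2 h⟩

lemma margin_scoreProfile (u : V → X → ℤ) (x y : X) :
    marginOf (scoreProfile u).rel x y =
      (Nat.card {i // u i y < u i x} : ℤ) - (Nat.card {i // u i x < u i y} : ℤ) := by
  unfold marginOf
  congr 2 <;> exact card_congr' (fun i => strict_scoreProfile u i _ _)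

end Counterexample
lemma exists_three (X : Type*) [Fintype X] (h3 : 3 ≤ Fintype.card X) :
    ∃ a b c : X, a ≠ b ∧ a ≠ c ∧ b ≠ c := by
  classical
  obtain ⟨s, -, hs⟩ := Finset.exists_subset_card_eq (le_trans h3 (le_of_eq (Finset.card_univ).symm))
  obtain ⟨a, b, c, hab, hac, hbc, -⟩ := Finset.card_eq_three.1 hs
  exact ⟨a, b, c, hab, hac, hbc⟩
section Main
variable {V X : Type*}

set_option maxHeartbeats 2000000 in
lemma copeland_not_weakIIA [Fintype V] [Fintype X]
    (h2 : 2 ≤ Fintype.card V) (h3 : 3 ≤ Fintype.card X) : ¬ WeakIIA (copeland V X) := by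
  classical
  obtain ⟨v₁, v₂, hv⟩ := Fintype.exists_pair_of_one_lt_card (by omega : 1 < Fintype.card V)
  obtain ⟨a, b, c, hab, hac, hbc⟩ := exists_three X h3
  set u₁ : V → X → ℤ := fun i z =>
    if i = v₁ then (if z = a then 2 else if z = c then 1 else if z = b then 0 else -1)
    else if i = v₂ then (if z = c then 2 else if z = b then 1 else if z = a then 0 else -1)
    else (if z = a ∨ z = b ∨ z = c then 0 else -1) with hu₁
  set u₂ : V → X → ℤ := fun i z =>
    if i = v₁ then (if z = c then 2 else if z = a then 1 else if z = b then 0 else -1)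
    else if i = v₂ then (if z = b then 2 else if z = c then 1 else if z = a then 0 else -1)
    else (if z = a ∨ z = b ∨ z = c then 0 else -1) with hu₂
  set R : Profile V X := scoreProfile u₁ with hR
  set R' : Profile V X := scoreProfile u₂ with hR'
  have hba := Ne.symm hab
  have hca := Ne.symm hac
  have hcb := Ne.symm hbc
  have hvv := Ne.symm hv
  have hcV : (2:ℤ) ≤ Fintype.card V := by exact_mod_cast h2
  -- margin facts for R
  have mab : marginOf R.rel a b = 0 := by
    rw [hR, margin_scoreProfile,
      card_of_eq v₁ (fun i => by
        simp only [hu₁]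
        by_cases h1 : i = v₁
        · norm_num [h1, hab, hac, hbc, hba, hca, hcb, hv, hvv]
        by_cases h2 : i = v₂ <;>
          norm_num [h1, h2, hab, hac, hbc, hba, hca, hcb, hv, hvv]),
      card_of_eq v₂ (fun i => by
        simp only [hu₁]
        by_cases h1 : i = v₁
        · norm_num [h1, hab, hac, hbc, hba, hca, hcb, hv, hvv]
        by_cases h2 : i = v₂ <;>
          norm_num [h1, h2, hab, hac, hbc, hba, hca, hcb, hv, hvv])]
    ring
  have mac : marginOf R.rel a c = 0 := by
    rw [hR, margin_scoreProfile,
      card_of_eq v₁ (fun i => by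
        simp only [hu₁]
        by_cases h1 : i = v₁
        · norm_num [h1, hab, hac, hbc, hba, hca, hcb, hv, hvv]
        by_cases h2 : i = v₂ <;>
          norm_num [h1, h2, hab, hac, hbc, hba, hca, hcb, hv, hvv]),
      card_of_eq v₂ (fun i => by
        simp only [hu₁]
        by_cases h1 : i = v₁
        · norm_num [h1, hab, hac, hbc, hba, hca, hcb, hv, hvv]
        by_cases h2 : i = v₂ <;>
          norm_num [h1, h2, hab, hac, hbc, hba, hca, hcb, hv, hvv])]
    ring
  have mcb : marginOf R.rel c b = 2 := by
    rw [hR, margin_scoreProfile,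
      card_of_pair v₁ v₂ hv (fun i => by
        simp only [hu₁]
        by_cases h1 : i = v₁
        · norm_num [h1, hab, hac, hbc, hba, hca, hcb, hv, hvv]
        by_cases h2 : i = v₂ <;>
          norm_num [h1, h2, hab, hac, hbc, hba, hca, hcb, hv, hvv]),
      card_of_false (fun i => by
        simp only [hu₁]
        by_cases h1 : i = v₁
        · norm_num [h1, hab, hac, hbc, hba, hca, hcb, hv, hvv]
        by_cases h2 : i = v₂ <;>
          norm_num [h1, h2, hab, hac, hbc, hba, hca, hcb, hv, hvv])]
    ring
  have maz : ∀ z, z ≠ a → z ≠ b → z ≠ c → marginOf R.rel a z = Fintype.card V := by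
    intro z hz1 hz2 hz3
    rw [hR, margin_scoreProfile,
      card_of_true (fun i => by
        simp only [hu₁]
        by_cases h1 : i = v₁
        · norm_num [h1, hab, hac, hbc, hba, hca, hcb, hv, hvv, hz1, hz2, hz3]
        by_cases h2 : i = v₂ <;>
          norm_num [h1, h2, hab, hac, hbc, hba, hca, hcb, hv, hvv, hz1, hz2, hz3]),
      card_of_false (fun i => by
        simp only [hu₁]
        by_cases h1 : i = v₁
        · norm_num [h1, hab, hac, hbc, hba, hca, hcb, hv, hvv, hz1, hz2, hz3]
        by_cases h2 : i = v₂ <;>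
          norm_num [h1, h2, hab, hac, hbc, hba, hca, hcb, hv, hvv, hz1, hz2, hz3])]
    ring
  have mbz : ∀ z, z ≠ a → z ≠ b → z ≠ c → marginOf R.rel b z = Fintype.card V := by
    intro z hz1 hz2 hz3
    rw [hR, margin_scoreProfile,
      card_of_true (fun i => by
        simp only [hu₁]
        by_cases h1 : i = v₁
        · norm_num [h1, hab, hac, hbc, hba, hca, hcb, hv, hvv, hz1, hz2, hz3]
        by_cases h2 : i = v₂ <;>
          norm_num [h1, h2, hab, hac, hbc, hba, hca, hcb, hv, hvv, hz1, hz2, hz3]),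
      card_of_false (fun i => by
        simp only [hu₁]
        by_cases h1 : i = v₁
        · norm_num [h1, hab, hac, hbc, hba, hca, hcb, hv, hvv, hz1, hz2, hz3]
        by_cases h2 : i = v₂ <;>
          norm_num [h1, h2, hab, hac, hbc, hba, hca, hcb, hv, hvv, hz1, hz2, hz3])]
    ring
  -- margin facts for R'
  have mab' : marginOf R'.rel a b = 0 := by
    rw [hR', margin_scoreProfile,
      card_of_eq v₁ (fun i => by
        simp only [hu₂]
        by_cases h1 : i = v₁
        · norm_num [h1, hab, hac, hbc, hba, hca, hcb, hv, hvv]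
        by_cases h2 : i = v₂ <;>
          norm_num [h1, h2, hab, hac, hbc, hba, hca, hcb, hv, hvv]),
      card_of_eq v₂ (fun i => by
        simp only [hu₂]
        by_cases h1 : i = v₁
        · norm_num [h1, hab, hac, hbc, hba, hca, hcb, hv, hvv]
        by_cases h2 : i = v₂ <;>
          norm_num [h1, h2, hab, hac, hbc, hba, hca, hcb, hv, hvv])]
    ring
  have mca' : marginOf R'.rel c a = 2 := by
    rw [hR', margin_scoreProfile,
      card_of_pair v₁ v₂ hv (fun i => by
        simp only [hu₂]
        by_cases h1 : i = v₁
        · norm_num [h1, hab, hac, hbc, hba, hca, hcb, hv, hvv]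
        by_cases h2 : i = v₂ <;>
          norm_num [h1, h2, hab, hac, hbc, hba, hca, hcb, hv, hvv]),
      card_of_false (fun i => by
        simp only [hu₂]
        by_cases h1 : i = v₁
        · norm_num [h1, hab, hac, hbc, hba, hca, hcb, hv, hvv]
        by_cases h2 : i = v₂ <;>
          norm_num [h1, h2, hab, hac, hbc, hba, hca, hcb, hv, hvv])]
    ring
  have mbc' : marginOf R'.rel b c = 0 := by
    rw [hR', margin_scoreProfile,
      card_of_eq v₂ (fun i => by
        simp only [hu₂]
        by_cases h1 : i = v₁
        · norm_num [h1, hab, hac, hbc, hba, hca, hcb, hv, hvv]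
        by_cases h2 : i = v₂ <;>
          norm_num [h1, h2, hab, hac, hbc, hba, hca, hcb, hv, hvv]),
      card_of_eq v₁ (fun i => by
        simp only [hu₂]
        by_cases h1 : i = v₁
        · norm_num [h1, hab, hac, hbc, hba, hca, hcb, hv, hvv]
        by_cases h2 : i = v₂ <;>
          norm_num [h1, h2, hab, hac, hbc, hba, hca, hcb, hv, hvv])]
    ring
  have maz' : ∀ z, z ≠ a → z ≠ b → z ≠ c → marginOf R'.rel a z = Fintype.card V := by
    intro z hz1 hz2 hz3
    rw [hR', margin_scoreProfile,
      card_of_true (fun i => by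
        simp only [hu₂]
        by_cases h1 : i = v₁
        · norm_num [h1, hab, hac, hbc, hba, hca, hcb, hv, hvv, hz1, hz2, hz3]
        by_cases h2 : i = v₂ <;>
          norm_num [h1, h2, hab, hac, hbc, hba, hca, hcb, hv, hvv, hz1, hz2, hz3]),
      card_of_false (fun i => by
        simp only [hu₂]
        by_cases h1 : i = v₁
        · norm_num [h1, hab, hac, hbc, hba, hca, hcb, hv, hvv, hz1, hz2, hz3]
        by_cases h2 : i = v₂ <;>
          norm_num [h1, h2, hab, hac, hbc, hba, hca, hcb, hv, hvv, hz1, hz2, hz3])]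
    ring
  have mbz' : ∀ z, z ≠ a → z ≠ b → z ≠ c → marginOf R'.rel b z = Fintype.card V := by
    intro z hz1 hz2 hz3
    rw [hR', margin_scoreProfile,
      card_of_true (fun i => by
        simp only [hu₂]
        by_cases h1 : i = v₁
        · norm_num [h1, hab, hac, hbc, hba, hca, hcb, hv, hvv, hz1, hz2, hz3]
        by_cases h2 : i = v₂ <;>
          norm_num [h1, h2, hab, hac, hbc, hba, hca, hcb, hv, hvv, hz1, hz2, hz3]),
      card_of_false (fun i => by
        simp only [hu₂]
        by_cases h1 : i = v₁
        · norm_num [h1, hab, hac, hbc, hba, hca, hcb, hv, hvv, hz1, hz2, hz3]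
        by_cases h2 : i = v₂ <;>
          norm_num [h1, h2, hab, hac, hbc, hba, hca, hcb, hv, hvv, hz1, hz2, hz3])]
    ring
  -- the two profiles agree on {a, b}
  have key : ∀ i p q, (p = a ∨ p = b) → (q = a ∨ q = b) → (R.rel i p q ↔ R'.rel i p q) := by
    rintro i p q (rfl | rfl) (rfl | rfl) <;>
    · show u₁ i _ ≤ u₁ i _ ↔ u₂ i _ ≤ u₂ i _
      simp only [hu₁, hu₂]
      by_cases h1 : i = v₁
      · norm_num [h1, hab, hac, hbc, hba, hca, hcb, hv, hvv]
      by_cases h2 : i = v₂ <;>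
        norm_num [h1, h2, hab, hac, hbc, hba, hca, hcb, hv, hvv]
  have hre : R.restrict a b = R'.restrict a b := by
    funext i p q
    simp only [Profile.restrict, eq_iff_iff]
    constructor
    · rintro ⟨hp, hq, hr⟩
      exact ⟨hp, hq, (key i p q hp hq).1 hr⟩
    · rintro ⟨hp, hq, hr⟩
      exact ⟨hp, hq, (key i p q hp hq).2 hr⟩
  -- scores in R : a strictly beats b
  have hSab : copelandScore R b < copelandScore R a := by
    rw [← sub_pos, copelandScore_eq_sum, copelandScore_eq_sum, ← Finset.sum_sub_distrib]
    apply Finset.sum_pos'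
    · intro z _
      by_cases hz1 : z = a
      · rw [hz1]
        have e1 := marginOf_antisymm R.rel a b
        rw [marginOf_self]
        split_ifs <;> linarith
      by_cases hz2 : z = b
      · rw [hz2]
        have e1 := marginOf_antisymm R.rel a b
        rw [marginOf_self]
        split_ifs <;> linarith
      by_cases hz3 : z = c
      · rw [hz3]
        have e1 := marginOf_antisymm R.rel a c
        have e2 := marginOf_antisymm R.rel c b
        split_ifs <;> linarith
      · have f1 := maz z hz1 hz2 hz3
        have f2 := mbz z hz1 hz2 hz3
        have e1 := marginOf_antisymm R.rel a z
        have e2 := marginOf_antisymm R.rel b z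
        split_ifs <;> linarith
    · refine ⟨c, Finset.mem_univ c, ?_⟩
      have e1 := marginOf_antisymm R.rel a c
      have e2 := marginOf_antisymm R.rel c b
      split_ifs <;> linarith
  -- scores in R' : b strictly beats a
  have hSba : copelandScore R' a < copelandScore R' b := by
    rw [← sub_pos, copelandScore_eq_sum, copelandScore_eq_sum, ← Finset.sum_sub_distrib]
    apply Finset.sum_pos'
    · intro z _
      by_cases hz1 : z = a
      · rw [hz1]
        have e1 := marginOf_antisymm R'.rel a b
        rw [marginOf_self]
        split_ifs <;> linarith
      by_cases hz2 : z = b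
      · rw [hz2]
        have e1 := marginOf_antisymm R'.rel a b
        rw [marginOf_self]
        split_ifs <;> linarith
      by_cases hz3 : z = c
      · rw [hz3]
        have e1 := marginOf_antisymm R'.rel c a
        have e2 := marginOf_antisymm R'.rel b c
        split_ifs <;> linarith
      · have f1 := maz' z hz1 hz2 hz3
        have f2 := mbz' z hz1 hz2 hz3
        have e1 := marginOf_antisymm R'.rel a z
        have e2 := marginOf_antisymm R'.rel b z
        split_ifs <;> linarith
    · refine ⟨c, Finset.mem_univ c, ?_⟩
      have e1 := marginOf_antisymm R'.rel c a
      have e2 := marginOf_antisymm R'.rel b c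
      split_ifs <;> linarith
  intro hW
  exact hW a b R R' hre ((strict_copeland_iff R a b).2 hSab)
    ((strict_copeland_iff R' b a).2 hSba)

end Main

/-- The Copeland CCR is a transitive and complete SWF satisfying anonymity, neutrality,
Pareto, and orderability, but it violates weak IIA (given ≥ 2 voters and ≥ 3 candidates). -/
theorem copeland_properties {V X : Type*} [Fintype V] [Fintype X]
    (h2 : 2 ≤ Fintype.card V) (h3 : 3 ≤ Fintype.card X) :
    (∀ (R : Profile V X) (x y z : X),
        copeland V X R x y → copeland V X R y z → copeland V X R x z) ∧
    (∀ (R : Profile V X) (x y : X), copeland V X R x y ∨ copeland V X R y x) ∧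
    (∀ (R : Profile V X) (τ : Equiv.Perm V) (x y : X),
        copeland V X (R.permVoters τ) x y ↔ copeland V X R x y) ∧
    (∀ (R : Profile V X) (π : Equiv.Perm X) (x y : X),
        copeland V X (R.permCands π) (π x) (π y) ↔ copeland V X R x y) ∧
    (∀ (R : Profile V X) (x y : X),
        (∀ i, strictPref (R.rel i) x y) → strictPref (copeland V X R) x y) ∧
    Orderable (copeland V X) ∧
    ¬ WeakIIA (copeland V X) := by
  have hne : Nonempty V := Fintype.card_pos_iff.1 (by omega)
  refine ⟨?_, ?_, ?_, ?_, ?_, copeland_orderable, copeland_not_weakIIA h2 h3⟩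
  · intro R x y z h1 h2
    exact le_trans h2 h1
  · intro R x y
    exact le_total _ _
  · intro R τ x y
    rw [copeland_def, copeland_def, copelandScore_permVoters, copelandScore_permVoters]
  · intro R π x y
    rw [copeland_def, copeland_def, copelandScore_permCands, copelandScore_permCands]
  · intro R x y h
    exact (strict_copeland_iff R x y).2 (copeland_pareto R x y h)
end

section
/- The Gillies Covering CCR f_cov is transitive: for every profile R, the relation f_cov(R) is transitive. -/
/-- Majority preference: x is majority preferred to y. -/
noncomputable def majPref {V X : Type*} (R : Profile V X) (x y : X) : Prop :=
  0 < marginOf R.rel x y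

/-- The strict Gillies covering relation. -/
noncomputable def Pcov {V X : Type*} (R : Profile V X) (x y : X) : Prop :=
  majPref R x y ∧ ∀ v, majPref R v x → majPref R v y

/-- Covering indifference: x and y relate by majority preference to all candidates alike. -/
noncomputable def Icov {V X : Type*} (R : Profile V X) (x y : X) : Prop :=
  ∀ v, (majPref R v x ↔ majPref R v y) ∧ (majPref R x v ↔ majPref R y v)

/-- The Gillies Covering CCR. -/
noncomputable def fcov {V X : Type*} : CCR V X :=
  fun R x y => Pcov R x y ∨ Icov R x y

/-- The Gillies Covering CCR is transitive. -/
theorem fcov_transitive {V X : Type*} (R : Profile V X) (x y z : X)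
    (hxy : fcov R x y) (hyz : fcov R y z) : fcov R x z := by
  rcases hxy with hxy | hxy <;> rcases hyz with hyz | hyz
  · exact Or.inl ⟨hyz.2 x hxy.1, fun v hv => hyz.2 v (hxy.2 v hv)⟩
  · exact Or.inl ⟨(hyz x).1.mp hxy.1, fun v hv => (hyz v).1.mp (hxy.2 v hv)⟩
  · exact Or.inl ⟨(hxy z).2.mpr hyz.1, fun v hv => hyz.2 v ((hxy v).1.mp hv)⟩
  · exact Or.inr fun v => ⟨(hxy v).1.trans (hyz v).1, (hxy v).2.trans (hyz v).2⟩
end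

section
/- Let |X| ≥ 4 and V finite. If f is a transitive CCR satisfying PI-weak IIA and Pareto, and we assume: (i) every coalition almost weakly decisive on some pair is weakly decisive, and (ii) weakly decisive coalitions are closed under intersection, then letting C be the intersection of all weakly decisive coalitions, C is weakly decisive and every member of C is a vetoer. -/
/-- A coalition C is weakly decisive for f. -/
def WeaklyDecisive {V X : Type*} (f : CCR V X) (C : Set V) : Prop :=
  ∀ (R : Profile V X) (x y : X), (∀ i ∈ C, strictPref (R.rel i) x y) → f R x y

/-- A coalition C is almost weakly decisive on x,y for f. -/
def AlmostWeaklyDecisive {V X : Type*} (f : CCR V X) (C : Set V) (x y : X) : Prop :=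
  ∀ R : Profile V X, (∀ i ∈ C, strictPref (R.rel i) x y) →
    (∀ j ∉ C, strictPref (R.rel j) y x) → f R x y

/-- A vetoer for f. -/
def Vetoer {V X : Type*} (f : CCR V X) (i : V) : Prop :=
  ∀ (R : Profile V X) (x y : X), strictPref (R.rel i) x y → ¬ strictPref (f R) y x

/-- PI-weak IIA. -/
def PIWeakIIA {V X : Type*} (f : CCR V X) : Prop :=
  ∀ (x y : X) (R R' : Profile V X), R.restrict x y = R'.restrict x y →
    strictPref (f R) x y → strictPref (f R') x y ∨ (f R' x y ∧ f R' y x)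

/-- Profile induced by an integer rank function (higher rank preferred). -/
def mkProfile {V X : Type*} (r : V → X → ℤ) : Profile V X where
  rel i u v := r i v ≤ r i u
  total i u v := le_total (r i v) (r i u)
  trans i u v w h1 h2 := le_trans h2 h1

lemma strictPref_mkProfile {V X : Type*} (r : V → X → ℤ) (i : V) (u v : X) :
    strictPref ((mkProfile r).rel i) u v ↔ r i v < r i u := by
  simp [strictPref, mkProfile]
  omega

lemma restrict_eq_of {V X : Type*} (R R' : Profile V X) (x y : X)
    (h : ∀ j, (R.rel j x y ↔ R'.rel j x y) ∧ (R.rel j y x ↔ R'.rel j y x)) :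
    R.restrict x y = R'.restrict x y := by
  funext j a b
  apply propext
  constructor <;> rintro ⟨ha, hb, hr⟩ <;> refine ⟨ha, hb, ?_⟩ <;>
    rcases ha with rfl | rfl <;> rcases hb with rfl | rfl
  · exact (R'.total j _ _).elim id id
  · exact (h j).1.mp hr
  · exact (h j).2.mp hr
  · exact (R'.total j _ _).elim id id
  · exact (R.total j _ _).elim id id
  · exact (h j).1.mpr hr
  · exact (h j).2.mpr hr
  · exact (R.total j _ _).elim id id

/-- Oligarchy under PI-weak IIA: given the decisiveness lemmas, the intersection of all
weakly decisive coalitions is weakly decisive and each of its members is a vetoer. -/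
theorem oligarchy_PI_weakIIA {V X : Type*} [Finite V] [Finite X]
    (h4 : 4 ≤ Nat.card X) (f : CCR V X)
    (htrans : ∀ (R : Profile V X) (x y z : X), f R x y → f R y z → f R x z)
    (hPI : PIWeakIIA f)
    (hPareto : ∀ (R : Profile V X) (x y : X),
      (∀ i, strictPref (R.rel i) x y) → strictPref (f R) x y)
    (hAWD : ∀ (C : Set V) (x y : X), x ≠ y → AlmostWeaklyDecisive f C x y →
      WeaklyDecisive f C)
    (hInter : ∀ C C' : Set V, WeaklyDecisive f C → WeaklyDecisive f C' →
      WeaklyDecisive f (C ∩ C')) :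
    WeaklyDecisive f {i | ∀ C : Set V, WeaklyDecisive f C → i ∈ C} ∧
    ∀ i ∈ {i | ∀ C : Set V, WeaklyDecisive f C → i ∈ C}, Vetoer f i := by
  classical
  -- every finite family of weakly decisive coalitions has weakly decisive intersection
  have key : ∀ S : Set (Set V), (∀ C ∈ S, WeaklyDecisive f C) → WeaklyDecisive f (⋂₀ S) := by
    intro S
    refine Set.Finite.induction_on
      (motive := fun s _ => (∀ C ∈ s, WeaklyDecisive f C) → WeaklyDecisive f (⋂₀ s))
      S (Set.toFinite S) ?_ ?_
    · intro _
      rw [Set.sInter_empty]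
      intro R x y h
      exact (hPareto R x y fun i => h i (Set.mem_univ i)).1
    · intro a s _ _ ih h
      rw [Set.sInter_insert]
      exact hInter a (⋂₀ s) (h a (Set.mem_insert a s))
        (ih fun C hC => h C (Set.mem_insert_of_mem _ hC))
  have hC0 : {i | ∀ C : Set V, WeaklyDecisive f C → i ∈ C}
      = ⋂₀ {C : Set V | WeaklyDecisive f C} := by
    ext i; simp [Set.mem_sInter]
  have hWDC0 : WeaklyDecisive f {i | ∀ C : Set V, WeaklyDecisive f C → i ∈ C} := by
    rw [hC0]; exact key _ fun C hC => hC
  refine ⟨hWDC0, ?_⟩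
  intro i hi R x y hxy hyx
  -- x ≠ y
  have hxney : x ≠ y := by
    rintro rfl; exact hxy.2 hxy.1
  -- find a third alternative a ∉ {x, y}
  obtain ⟨a, ha⟩ : ∃ a : X, a ∉ ({x, y} : Set X) := by
    by_contra hcon
    push_neg at hcon
    have huniv : (Set.univ : Set X) ⊆ {x, y} := fun a _ => hcon a
    have h1 : (Set.univ : Set X).ncard ≤ ({x, y} : Set X).ncard :=
      Set.ncard_le_ncard huniv (Set.toFinite _)
    have h2 : ({x, y} : Set X).ncard ≤ 2 := by
      refine le_trans (Set.ncard_insert_le x {y}) ?_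
      simp [Set.ncard_singleton]
    rw [Set.ncard_univ] at h1
    omega
  have hax : a ≠ x := fun h => ha (by simp [h])
  have hay : a ≠ y := fun h => ha (by simp [h])
  -- the rank function defining the auxiliary profile R'
  set r : V → X → ℤ := fun j u =>
    if j = i then (if u = x then 3 else if u = a then 2 else if u = y then 1 else 0)
    else (if u = a then 3 else if u = x then (if R.rel j x y then 2 else 1)
      else if u = y then (if R.rel j y x then 2 else 1) else 0) with hr
  set R' : Profile V X := mkProfile r with hR'
  -- ranks on key alternatives
  have rix : r i x = 3 := by simp [hr]
  have ria : r i a = 2 := by simp [hr, hax]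
  have riy : r i y = 1 := by simp [hr, Ne.symm hay, hxney.symm]
  have rja : ∀ j, j ≠ i → r j a = 3 := by intro j hj; simp [hr, hj]
  have rjx : ∀ j, j ≠ i → r j x = (if R.rel j x y then 2 else 1) := by
    intro j hj; simp [hr, hj, hax.symm]
  have rjy : ∀ j, j ≠ i → r j y = (if R.rel j y x then 2 else 1) := by
    intro j hj; simp [hr, hj, Ne.symm hay, hxney.symm]
  -- R and R' agree on {x, y}
  have hrestr : R.restrict x y = R'.restrict x y := by
    apply restrict_eq_of
    intro j
    by_cases hj : j = i
    · subst hj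
      constructor
      · simp only [hR', mkProfile, rix, riy]
        constructor <;> intro _
        · omega
        · exact hxy.1
      · simp only [hR', mkProfile, rix, riy]
        constructor <;> intro h
        · exact absurd h hxy.2
        · omega
    · constructor
      · simp only [hR', mkProfile, rjx j hj, rjy j hj]
        rcases R.total j x y with h | h
        · simp [h]; split <;> omega
        · constructor <;> intro h'
          · simp [h']; split <;> omega
          · by_contra hne
            simp [hne, h] at h'
      · simp only [hR', mkProfile, rjx j hj, rjy j hj]
        rcases R.total j y x with h | h
        · simp [h]; split <;> omega
        · constructor <;> intro h'
          · simp [h']; split <;> omega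
          · by_contra hne
            simp [hne, h] at h'
  have hrestr' : R.restrict y x = R'.restrict y x := by
    apply restrict_eq_of
    intro j
    have := congrFun (congrFun (congrFun hrestr j) x) y
    have := congrFun (congrFun (congrFun hrestr j) y) x
    constructor
    · constructor <;> intro h
      · have h' : R.restrict x y j y x := ⟨Or.inr rfl, Or.inl rfl, h⟩
        rw [hrestr] at h'
        exact h'.2.2
      · have h' : R'.restrict x y j y x := ⟨Or.inr rfl, Or.inl rfl, h⟩
        rw [← hrestr] at h'
        exact h'.2.2
    · constructor <;> intro h
      · have h' : R.restrict x y j x y := ⟨Or.inl rfl, Or.inr rfl, h⟩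
        rw [hrestr] at h'
        exact h'.2.2
      · have h' : R'.restrict x y j x y := ⟨Or.inl rfl, Or.inr rfl, h⟩
        rw [← hrestr] at h'
        exact h'.2.2
  -- everyone strictly prefers a to y in R'
  have hparay : ∀ j, strictPref (R'.rel j) a y := by
    intro j
    rw [hR', strictPref_mkProfile]
    by_cases hj : j = i
    · subst hj; rw [ria, riy]; omega
    · rw [rja j hj, rjy j hj]; split <;> omega
  have hfay : strictPref (f R') a y := hPareto R' a y hparay
  -- transfer y ≻ x from R to R'
  have hcase := hPI y x R R' hrestr' hyx
  have hfyx : f R' y x := by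
    rcases hcase with h | h
    · exact h.1
    · exact h.1
  have hfax : f R' a x := htrans R' a y x hfay.1 hfyx
  have hnotfxa : ¬ f R' x a := by
    rcases hcase with h | h
    · intro hxa
      exact h.2 (htrans R' x a y hxa hfay.1)
    · intro hxa
      exact hfay.2 (htrans R' y x a h.1 hxa)
  have hsax : strictPref (f R') a x := ⟨hfax, hnotfxa⟩
  -- the coalition of everyone but i is almost weakly decisive on a, x
  have hAWDax : AlmostWeaklyDecisive f ({i}ᶜ : Set V) a x := by
    intro Q hQ1 hQ2
    have hQi : strictPref (Q.rel i) x a := hQ2 i (by simp)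
    have hrQ : R'.restrict a x = Q.restrict a x := by
      apply restrict_eq_of
      intro j
      by_cases hj : j = i
      · subst hj
        constructor
        · simp only [hR', mkProfile, rix, ria]
          constructor <;> intro h
          · omega
          · exact absurd h hQi.2
        · simp only [hR', mkProfile, rix, ria]
          constructor <;> intro _
          · exact hQi.1
          · omega
      · have hQj : strictPref (Q.rel j) a x := hQ1 j (by simp [hj])
        constructor
        · simp only [hR', mkProfile, rja j hj, rjx j hj]
          constructor <;> intro _
          · exact hQj.1
          · split <;> omega
        · simp only [hR', mkProfile, rja j hj, rjx j hj]
          constructor <;> intro h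
          · exfalso; revert h; split <;> omega
          · exact absurd h hQj.2
    rcases hPI a x R' Q hrQ hsax with h | h
    · exact h.1
    · exact h.1
  have hWD : WeaklyDecisive f ({i}ᶜ : Set V) := hAWD _ a x hax hAWDax
  have : i ∈ ({i}ᶜ : Set V) := hi _ hWD
  simp at this
end

section
/- If R is a quasi-transitive binary relation (P(R) is transitive) on a finite set X, then the maximal-element choice function M(Y,R) = {x ∈ Y : no y ∈ Y with yP(R)x} satisfies path independence: for all nonempty Y1, Y2 ⊆ X, M(Y1 ∪ Y2, R) = M(M(Y1,R) ∪ M(Y2,R), R). -/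
/-- Maximal-element choice from a set. -/
def Mchoice {X : Type*} (R : X → X → Prop) (Y : Set X) : Set X :=
  {x ∈ Y | ∀ y ∈ Y, ¬ strictPref R y x}

/-- If R is quasi-transitive on a finite set, then maximal-element choice satisfies path
independence. -/
theorem Mchoice_path_independent {X : Type*} [Finite X] (R : X → X → Prop)
    (hq : ∀ x y z, strictPref R x y → strictPref R y z → strictPref R x z) :
    ∀ Y₁ Y₂ : Set X, Y₁.Nonempty → Y₂.Nonempty →
      Mchoice R (Y₁ ∪ Y₂) = Mchoice R (Mchoice R Y₁ ∪ Mchoice R Y₂) := by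
  have hirr : ∀ x, ¬ strictPref R x x := fun x h => h.2 h.1
  have hwf : WellFounded (strictPref R) := by
    have h1 : IsTrans X (strictPref R) := ⟨fun a b c => hq a b c⟩
    have h2 : IsIrrefl X (strictPref R) := ⟨hirr⟩
    exact Finite.wellFounded_of_trans_of_irrefl _
  -- Every element of Y is either maximal or dominated by a maximal element.
  have claim : ∀ (Y : Set X), ∀ x ∈ Y, ∃ m ∈ Mchoice R Y, m = x ∨ strictPref R m x := by
    intro Y x hx
    obtain ⟨m, hmS, hmin⟩ := hwf.has_min {m | m ∈ Y ∧ (m = x ∨ strictPref R m x)}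
      ⟨x, hx, Or.inl rfl⟩
    refine ⟨m, ⟨hmS.1, fun y hy hP => ?_⟩, hmS.2⟩
    rcases hmS.2 with rfl | hmx
    · exact hmin y ⟨hy, Or.inr hP⟩ hP
    · exact hmin y ⟨hy, Or.inr (hq _ _ _ hP hmx)⟩ hP
  intro Y₁ Y₂ _ _
  ext x
  constructor
  · rintro ⟨hxU, hmax⟩
    refine ⟨?_, fun y hy => hmax y (hy.elim (fun h => Or.inl h.1) (fun h => Or.inr h.1))⟩
    rcases hxU with hx1 | hx2
    · exact Or.inl ⟨hx1, fun y hy => hmax y (Or.inl hy)⟩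
    · exact Or.inr ⟨hx2, fun y hy => hmax y (Or.inr hy)⟩
  · rintro ⟨hxV, hmax⟩
    have hxU : x ∈ Y₁ ∪ Y₂ := hxV.elim (fun h => Or.inl h.1) (fun h => Or.inr h.1)
    refine ⟨hxU, fun y hy hP => ?_⟩
    rcases hy with hy1 | hy2
    · obtain ⟨m, hm, hcase⟩ := claim Y₁ y hy1
      rcases hcase with rfl | hmy
      · exact hmax m (Or.inl hm) hP
      · exact hmax m (Or.inl hm) (hq _ _ _ hmy hP)
    · obtain ⟨m, hm, hcase⟩ := claim Y₂ y hy2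
      rcases hcase with rfl | hmy
      · exact hmax m (Or.inr hm) hP
      · exact hmax m (Or.inr hm) (hq _ _ _ hmy hP)
end
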